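/- arXiv:math/0610194 — 7 statements merged into one kernel-verified Lean document; each statement's English description precedes it below -/
import Mathlib

section
/- Let M be a homotopical category, M_Q a full subcategory, Q : M → M a functor whose image lies in M_Q, and q : Q ⟶ 𝟭_M a natural transformation whose components are weak equivalences. Then the inclusion I : M_Q ↪ M induces an equivalence of categories Ho(M_Q) ≃ Ho(M), where Ho denotes localization at the weak equivalences (M_Q being given the weak equivalences of M between its objects). -/
open CategoryTheory

/-- If `(Q, q)` is a left deformation of a homotopical category `M` into a
full subcategory `M_Q`, then the inclusion `M_Q ↪ M` induces an equivalence
`Ho(M_Q) ≃ Ho(M)` of localizations at the weak equivalences. -/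
theorem statement1 {M : Type u} [Category.{v} M] (W : MorphismProperty M)
    (hid : ∀ X : M, W (𝟙 X))
    (h26 : ∀ {X Y Z T : M} (f : X ⟶ Y) (g : Y ⟶ Z) (h : Z ⟶ T),
      W (f ≫ g) → W (g ≫ h) → W f ∧ W g ∧ W h ∧ W (f ≫ g ≫ h))
    (P : M → Prop) (Q : M ⥤ M) (hQ : ∀ X : M, P (Q.obj X))
    (q : Q ⟶ 𝟭 M) (hq : ∀ X : M, W (q.app X)) :
    (Localization.Construction.lift
      (W := W.inverseImage (ObjectProperty.ι P))
      (ObjectProperty.ι P ⋙ W.Q)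
      (fun _ _ f hf => Localization.inverts W.Q W _ hf)).IsEquivalence := by
  -- weak equivalences on the subcategory
  set W' := W.inverseImage (ObjectProperty.ι P) with hW'
  -- 2-out-of-3 consequences
  have hcomp : ∀ {X Y Z : M} (f : X ⟶ Y) (g : Y ⟶ Z), W f → W g → W (f ≫ g) := by
    intro X Y Z f g hf hg
    have := h26 f (𝟙 Y) g (by simpa using hf) (by simpa using hg)
    simpa using this.2.2.2
  have hcancel : ∀ {X Y Z : M} (f : X ⟶ Y) (g : Y ⟶ Z), W (f ≫ g) → W g → W f := by
    intro X Y Z f g hfg hg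
    exact (h26 f g (𝟙 Z) hfg (by simpa using hg)).1
  -- Q preserves weak equivalences
  have hQW : ∀ {X Y : M} (f : X ⟶ Y), W f → W (Q.map f) := by
    intro X Y f hf
    have hnat : Q.map f ≫ q.app Y = q.app X ≫ f := q.naturality f
    have : W (Q.map f ≫ q.app Y) := by rw [hnat]; exact hcomp _ _ (hq X) hf
    exact hcancel _ _ this (hq Y)
  -- the two functors
  set Q' : M ⥤ ObjectProperty.FullSubcategory P := ObjectProperty.lift P Q hQ with hQ'
  have hQ'incl : Q' ⋙ ObjectProperty.ι P = Q :=
    rfl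
  set F : W'.Localization ⥤ W.Localization :=
    Localization.Construction.lift (W := W') (ObjectProperty.ι P ⋙ W.Q)
      (fun _ _ f hf => Localization.inverts W.Q W _ hf) with hF
  set G : W.Localization ⥤ W'.Localization :=
    Localization.Construction.lift (W := W) (Q' ⋙ W'.Q)
      (fun X Y f hf => by
        have : W' (Q'.map f) := hQW f hf
        exact Localization.inverts W'.Q W' _ this) with hG
  have facF : W'.Q ⋙ F = ObjectProperty.ι P ⋙ W.Q :=
    Localization.Construction.fac _ _
  have facG : W.Q ⋙ G = Q' ⋙ W'.Q := Localization.Construction.fac _ _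
  -- the natural transformation q restricted to the subcategory
  let α : (ObjectProperty.ι P ⋙ Q') ⟶ 𝟭 (ObjectProperty.FullSubcategory P) :=
    { app := fun X => ObjectProperty.homMk (q.app X.obj : Q.obj X.obj ⟶ X.obj)
      naturality := fun X Y f => by ext; exact q.naturality f.hom }
  have hα : ∀ X : ObjectProperty.FullSubcategory P, W' (α.app X) := fun X => hq X.obj
  -- unit iso : W'.Q ≅ (incl ⋙ Q') ⋙ W'.Q
  have : ∀ X : ObjectProperty.FullSubcategory P, IsIso ((Functor.whiskerRight α W'.Q).app X) := fun X =>
    Localization.inverts W'.Q W' _ (hα X)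
  haveI : IsIso (Functor.whiskerRight α W'.Q) := NatIso.isIso_of_isIso_app _
  let e : ((ObjectProperty.ι P ⋙ Q') ⋙ W'.Q) ≅ W'.Q :=
    (asIso (Functor.whiskerRight α W'.Q)) ≪≫ (Functor.leftUnitor _)
  -- counit iso : Q ⋙ W.Q ≅ W.Q
  have : ∀ X : M, IsIso ((Functor.whiskerRight q W.Q).app X) := fun X =>
    Localization.inverts W.Q W _ (hq X)
  haveI : IsIso (Functor.whiskerRight q W.Q) := NatIso.isIso_of_isIso_app _
  let e' : (Q ⋙ W.Q) ≅ W.Q :=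
    (asIso (Functor.whiskerRight q W.Q)) ≪≫ (Functor.leftUnitor _)
  -- Lifting instances
  haveI l1 : Localization.Lifting W'.Q W'
      ((ObjectProperty.ι P ⋙ Q') ⋙ W'.Q) (F ⋙ G) := by
    constructor
    refine eqToIso ?_
    calc W'.Q ⋙ F ⋙ G = (W'.Q ⋙ F) ⋙ G := by rw [Functor.assoc]
      _ = (ObjectProperty.ι P ⋙ W.Q) ⋙ G := by rw [facF]
      _ = ObjectProperty.ι P ⋙ (W.Q ⋙ G) := by rw [Functor.assoc]
      _ = ObjectProperty.ι P ⋙ (Q' ⋙ W'.Q) := by rw [facG]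
      _ = (ObjectProperty.ι P ⋙ Q') ⋙ W'.Q := by rw [Functor.assoc]
  haveI l2 : Localization.Lifting W.Q W (Q ⋙ W.Q) (G ⋙ F) := by
    constructor
    refine eqToIso ?_
    calc W.Q ⋙ G ⋙ F = (W.Q ⋙ G) ⋙ F := by rw [Functor.assoc]
      _ = (Q' ⋙ W'.Q) ⋙ F := by rw [facG]
      _ = Q' ⋙ (W'.Q ⋙ F) := by rw [Functor.assoc]
      _ = Q' ⋙ (ObjectProperty.ι P ⋙ W.Q) := by rw [facF]
      _ = (Q' ⋙ ObjectProperty.ι P) ⋙ W.Q := by rw [Functor.assoc]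
      _ = Q ⋙ W.Q := by rw [hQ'incl]
  -- assemble the equivalence
  let unitIso : 𝟭 W'.Localization ≅ F ⋙ G :=
    (Localization.liftNatIso W'.Q W' W'.Q ((ObjectProperty.ι P ⋙ Q') ⋙ W'.Q)
      (𝟭 _) (F ⋙ G) e.symm)
  let counitIso : G ⋙ F ≅ 𝟭 W.Localization :=
    (Localization.liftNatIso W.Q W (Q ⋙ W.Q) W.Q (G ⋙ F) (𝟭 _) e')
  exact (CategoryTheory.Equivalence.mk F G unitIso counitIso).isEquivalence_functor
end

section
/- Let M be a homotopical category, M_D a full subcategory, D : M → M a functor whose image lies in M_D, connected to the identity by a finite zigzag of natural weak equivalences D ∼ D_k ∼ ⋯ ∼ D_1 ∼ 𝟭_M, such that each intermediate functor D_i maps M_D into M_D. Then the inclusion I : M_D ↪ M induces an equivalence of categories Ho(M_D) ≃ Ho(M). -/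
open CategoryTheory

namespace Statement2Aux

universe v u v₂ u₂

variable {M : Type u} [Category.{v} M]

/-- A zigzag of natural transformations whose components are inverted by `L` yields,
for every `i`, an isomorphism `Ds i ⋙ L ≅ Ds (Fin.last n) ⋙ L`. -/
lemma zigzagIso {E : Type u₂} [Category.{v₂} E] (W : MorphismProperty M)
    (L : M ⥤ E) (hL : W.IsInvertedBy L) (n : ℕ) (Ds : Fin (n + 1) → M ⥤ M)
    (hzigzag : ∀ i : Fin n,
      (∃ α : Ds i.castSucc ⟶ Ds i.succ, ∀ X : M, W (α.app X)) ∨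
      (∃ α : Ds i.succ ⟶ Ds i.castSucc, ∀ X : M, W (α.app X)))
    (i : Fin (n + 1)) : Nonempty (Ds i ⋙ L ≅ Ds (Fin.last n) ⋙ L) := by
  induction i using Fin.reverseInduction with
  | last => exact ⟨Iso.refl _⟩
  | cast i ih =>
    obtain ⟨e⟩ := ih
    rcases hzigzag i with ⟨α, hα⟩ | ⟨α, hα⟩
    · haveI : ∀ X, IsIso ((Functor.whiskerRight α L).app X) := fun X => hL _ (hα X)
      haveI : IsIso (Functor.whiskerRight α L) := NatIso.isIso_of_isIso_app _
      exact ⟨asIso (Functor.whiskerRight α L) ≪≫ e⟩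
    · haveI : ∀ X, IsIso ((Functor.whiskerRight α L).app X) := fun X => hL _ (hα X)
      haveI : IsIso (Functor.whiskerRight α L) := NatIso.isIso_of_isIso_app _
      exact ⟨(asIso (Functor.whiskerRight α L)).symm ≪≫ e⟩

/-- Restricting a functor equal to the identity gives the identity (up to iso). -/
noncomputable def liftIdIso (P : M → Prop) (E : M ⥤ M) (hE : E = 𝟭 M)
    (h : ∀ X : ObjectProperty.FullSubcategory P, P (E.obj X.obj)) :
    ObjectProperty.lift P (ObjectProperty.ι P ⋙ E) h ≅ 𝟭 (ObjectProperty.FullSubcategory P) := by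
  subst hE
  exact NatIso.ofComponents (fun X => Iso.refl _) (by aesop_cat)

/-- Restrictions of equal functors are isomorphic. -/
noncomputable def liftCongrIso (P : M → Prop) (E E₂ : M ⥤ M) (hE : E = E₂)
    (h : ∀ X : ObjectProperty.FullSubcategory P, P (E.obj X.obj))
    (h₂ : ∀ X : ObjectProperty.FullSubcategory P, P (E₂.obj X.obj)) :
    ObjectProperty.lift P (ObjectProperty.ι P ⋙ E) h ≅
      ObjectProperty.lift P (ObjectProperty.ι P ⋙ E₂) h₂ := by
  subst hE
  exact Iso.refl _

end Statement2Aux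

open Statement2Aux

/-- If `D` is a middle deformation of the homotopical category `M` into a full
subcategory `M_D` (i.e. `D` is connected to the identity by a finite zigzag of natural weak
equivalences, each intermediate functor mapping `M_D` into itself), then the inclusion
`M_D ↪ M` induces an equivalence `Ho(M_D) ≃ Ho(M)`. -/
theorem statement2 {M : Type u} [Category.{v} M] (W : MorphismProperty M)
    (hid : ∀ X : M, W (𝟙 X))
    (h26 : ∀ {X Y Z T : M} (f : X ⟶ Y) (g : Y ⟶ Z) (h : Z ⟶ T),
      W (f ≫ g) → W (g ≫ h) → W f ∧ W g ∧ W h ∧ W (f ≫ g ≫ h))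
    (P : M → Prop) (D : M ⥤ M) (hD : ∀ X : M, P (D.obj X))
    -- the zigzag `D = Ds 0 ∼ Ds 1 ∼ ⋯ ∼ Ds n = 𝟭 M`:
    (n : ℕ) (Ds : Fin (n + 1) → (M ⥤ M))
    (hfirst : Ds 0 = D) (hlast : Ds (Fin.last n) = 𝟭 M)
    (hzigzag : ∀ i : Fin n,
      (∃ α : Ds i.castSucc ⟶ Ds i.succ, ∀ X : M, W (α.app X)) ∨
      (∃ α : Ds i.succ ⟶ Ds i.castSucc, ∀ X : M, W (α.app X)))
    -- each intermediate functor maps `M_D` into itself: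
    (hinter : ∀ (i : Fin (n + 1)) (X : M), i ≠ Fin.last n → P X → P ((Ds i).obj X)) :
    (Localization.Construction.lift
      (W := W.inverseImage (ObjectProperty.ι P))
      (ObjectProperty.ι P ⋙ W.Q)
      (fun _ _ f hf => Localization.inverts W.Q W _ hf)).IsEquivalence := by
  classical
  -- basic closure properties of `W` derived from the 2-out-of-6 property
  have wcomp : ∀ {X Y Z : M} (f : X ⟶ Y) (g : Y ⟶ Z), W f → W g → W (f ≫ g) := by
    intro X Y Z f g hf hg
    have := (h26 f (𝟙 Y) g (by simpa using hf) (by simpa using hg)).2.2.2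
    simpa using this
  have wcancel_left : ∀ {X Y Z : M} (f : X ⟶ Y) (g : Y ⟶ Z), W f → W (f ≫ g) → W g := by
    intro X Y Z f g hf hfg
    exact (h26 (𝟙 X) f g (by simpa using hf) hfg).2.2.1
  have wcancel_right : ∀ {X Y Z : M} (f : X ⟶ Y) (g : Y ⟶ Z), W g → W (f ≫ g) → W f := by
    intro X Y Z f g hg hfg
    exact (h26 f g (𝟙 Z) hfg (by simpa using hg)).1
  -- every functor in the zigzag preserves weak equivalences
  have hpres : ∀ (i : Fin (n + 1)) ⦃X Y : M⦄ (f : X ⟶ Y), W f → W ((Ds i).map f) := by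
    intro i
    induction i using Fin.reverseInduction with
    | last => intro X Y f hf; rw [hlast]; simpa using hf
    | cast i ih =>
      intro X Y f hf
      rcases hzigzag i with ⟨α, hα⟩ | ⟨α, hα⟩
      · have h1 : W ((Ds i.castSucc).map f ≫ α.app Y) := by
          rw [α.naturality]
          exact wcomp _ _ (hα X) (ih f hf)
        exact wcancel_right _ _ (hα Y) h1
      · have h1 : W (α.app X ≫ (Ds i.castSucc).map f) := by
          rw [← α.naturality]
          exact wcomp _ _ (ih f hf) (hα Y)
        exact wcancel_left _ _ (hα X) h1
  have hDpres : ∀ ⦃X Y : M⦄ (f : X ⟶ Y), W f → W (D.map f) := by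
    rw [← hfirst]; exact hpres 0
  -- notation
  let ι : ObjectProperty.FullSubcategory P ⥤ M := ObjectProperty.ι P
  let W' : MorphismProperty (ObjectProperty.FullSubcategory P) := W.inverseImage ι
  -- the functor in question and its inverse up to isomorphism
  let F : W'.Localization ⥤ W.Localization :=
    Localization.Construction.lift (ι ⋙ W.Q)
      (fun _ _ f hf => Localization.inverts W.Q W _ hf)
  let D' : M ⥤ ObjectProperty.FullSubcategory P := ObjectProperty.lift P D hD
  have hGinv : W.IsInvertedBy (D' ⋙ W'.Q) := fun X Y f hf =>
    Localization.inverts W'.Q W' (D'.map f) (show W (D.map f) from hDpres f hf)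
  let G : W.Localization ⥤ W'.Localization :=
    Localization.Construction.lift (D' ⋙ W'.Q) hGinv
  have hF : W'.Q ⋙ F = ι ⋙ W.Q := Localization.Construction.fac _ _
  have hG : W.Q ⋙ G = D' ⋙ W'.Q := Localization.Construction.fac _ _
  -- the restricted zigzag in the full subcategory
  have hP : ∀ (i : Fin (n + 1)) (X : ObjectProperty.FullSubcategory P), P ((Ds i).obj X.obj) := by
    intro i X
    by_cases h : i = Fin.last n
    · rw [h, hlast]; exact X.2
    · exact hinter i X.obj h X.2
  let Ds' : Fin (n + 1) → (ObjectProperty.FullSubcategory P ⥤ ObjectProperty.FullSubcategory P) := fun i =>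
    ObjectProperty.lift P (ι ⋙ Ds i) (hP i)
  have hzig' : ∀ i : Fin n,
      (∃ α : Ds' i.castSucc ⟶ Ds' i.succ, ∀ X, W' (α.app X)) ∨
      (∃ α : Ds' i.succ ⟶ Ds' i.castSucc, ∀ X, W' (α.app X)) := by
    intro i
    rcases hzigzag i with ⟨α, hα⟩ | ⟨α, hα⟩
    · exact Or.inl ⟨⟨fun X => ObjectProperty.homMk (α.app X.obj), fun {X Y} f => by ext; exact α.naturality f.hom⟩, fun X => hα X.obj⟩
    · exact Or.inr ⟨⟨fun X => ObjectProperty.homMk (α.app X.obj), fun {X Y} f => by ext; exact α.naturality f.hom⟩, fun X => hα X.obj⟩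
  -- zigzag isomorphisms after localization
  obtain ⟨e₀⟩ := zigzagIso W W.Q (Localization.inverts W.Q W) n Ds hzigzag 0
  obtain ⟨e₁⟩ := zigzagIso W' W'.Q (Localization.inverts W'.Q W') n Ds' hzig' 0
  -- `D ⋙ W.Q ≅ W.Q`
  have eD : D ⋙ W.Q ≅ W.Q :=
    eqToIso (by rw [hfirst]) ≪≫ e₀ ≪≫ eqToIso (by rw [hlast]) ≪≫ Functor.leftUnitor _
  -- `(ι ⋙ D') ⋙ W'.Q ≅ W'.Q`
  have iso0 : ι ⋙ D' ≅ Ds' 0 := by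
    refine ?_ ≪≫ liftCongrIso P D (Ds 0) hfirst.symm (fun X => hD X.obj) (hP 0)
    exact Iso.refl _
  have eD' : (ι ⋙ D') ⋙ W'.Q ≅ W'.Q :=
    Functor.isoWhiskerRight iso0 W'.Q ≪≫ e₁ ≪≫
      Functor.isoWhiskerRight (liftIdIso P (Ds (Fin.last n)) hlast (hP (Fin.last n))) W'.Q ≪≫
      Functor.leftUnitor _
  -- lift the isomorphisms to the localizations
  letI : Localization.Lifting W'.Q W' ((ι ⋙ D') ⋙ W'.Q) (F ⋙ G) :=
    ⟨eqToIso (by rw [← Functor.assoc, hF, Functor.assoc, hG, Functor.assoc])⟩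
  have η : F ⋙ G ≅ 𝟭 _ :=
    Localization.liftNatIso W'.Q W' ((ι ⋙ D') ⋙ W'.Q) W'.Q (F ⋙ G) (𝟭 _) eD'
  have hDι : D' ⋙ ι = D := rfl
  letI : Localization.Lifting W.Q W (D ⋙ W.Q) (G ⋙ F) :=
    ⟨eqToIso (by rw [← Functor.assoc, hG, Functor.assoc, hF, ← Functor.assoc, hDι])⟩
  have ε : G ⋙ F ≅ 𝟭 _ :=
    Localization.liftNatIso W.Q W (D ⋙ W.Q) W.Q (G ⋙ F) (𝟭 _) eD
  exact (CategoryTheory.Equivalence.mk F G η.symm ε).isEquivalence_functor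
end

section
/- Let F : M → N be a functor between homotopical categories, and let (Q, q) be a left deformation of M into a full subcategory M_Q on which F preserves weak equivalences. Then the composite δ ∘ F ∘ Q : M → Ho(N) (where δ : N → Ho(N) is the localization) sends weak equivalences to isomorphisms, and together with the natural transformation δ(F q) : δ ∘ F ∘ Q ⟶ δ ∘ F it is terminal among pairs (G, α) where G : M → Ho(N) sends weak equivalences to isomorphisms and α : G ⟶ δ ∘ F: every such α factors uniquely through δ(F q). -/
open CategoryTheory

/-- If `(Q, q)` is a left deformation of `M` into a full subcategory `M_Q`
on which `F : M ⥤ N` preserves weak equivalences, then `δ ∘ F ∘ Q : M ⥤ Ho(N)` sends weak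
equivalences to isomorphisms and, equipped with the comparison map `δ(Fq)`, is terminal
among homotopical functors `M ⥤ Ho(N)` with a map to `δ ∘ F`. -/
theorem statement3 {M : Type u₁} [Category.{v₁} M] {N : Type u₂} [Category.{v₂} N]
    (WM : MorphismProperty M) (WN : MorphismProperty N)
    (hidM : ∀ X : M, WM (𝟙 X))
    (h26M : ∀ {X Y Z T : M} (f : X ⟶ Y) (g : Y ⟶ Z) (h : Z ⟶ T),
      WM (f ≫ g) → WM (g ≫ h) → WM f ∧ WM g ∧ WM h ∧ WM (f ≫ g ≫ h))
    (hidN : ∀ X : N, WN (𝟙 X))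
    (h26N : ∀ {X Y Z T : N} (f : X ⟶ Y) (g : Y ⟶ Z) (h : Z ⟶ T),
      WN (f ≫ g) → WN (g ≫ h) → WN f ∧ WN g ∧ WN h ∧ WN (f ≫ g ≫ h))
    (F : M ⥤ N)
    (P : M → Prop) (Q : M ⥤ M) (hQ : ∀ X : M, P (Q.obj X))
    (q : Q ⟶ 𝟭 M) (hq : ∀ X : M, WM (q.app X))
    -- `F` preserves weak equivalences between objects of `M_Q`:
    (hF : ∀ {X Y : M} (f : X ⟶ Y), P X → P Y → WM f → WN (F.map f)) :
    -- the comparison map `δ(Fq) : δ∘F∘Q ⟶ δ∘F`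
    let δ := WN.Q
    let κ : Q ⋙ F ⋙ δ ⟶ F ⋙ δ :=
      Functor.whiskerRight q (F ⋙ δ) ≫ (Functor.leftUnitor (F ⋙ δ)).hom
    -- `δ∘F∘Q` is homotopical, and `(δ∘F∘Q, κ)` is terminal:
    (∀ {X Y : M} (f : X ⟶ Y), WM f → IsIso ((Q ⋙ F ⋙ δ).map f)) ∧
    (∀ (G : M ⥤ WN.Localization)
      (_ : ∀ {X Y : M} (f : X ⟶ Y), WM f → IsIso (G.map f))
      (α : G ⟶ F ⋙ δ),
      ∃! β : G ⟶ Q ⋙ F ⋙ δ, β ≫ κ = α) := by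
  intro δ κ
  -- composition closure and left cancellation from 2-out-of-6 + identities
  have compM : ∀ {X Y Z : M} (f : X ⟶ Y) (g : Y ⟶ Z), WM f → WM g → WM (f ≫ g) := by
    intro X Y Z f g hf hg
    have h := h26M f (𝟙 Y) g (by simpa using hf) (by simpa using hg)
    simpa using h.2.2.2
  have cancelL : ∀ {X Y Z : M} (f : X ⟶ Y) (g : Y ⟶ Z), WM (f ≫ g) → WM g → WM f := by
    intro X Y Z f g hfg hg
    exact (h26M f g (𝟙 Z) hfg (by simpa using hg)).1
  have hQmap : ∀ {X Y : M} (f : X ⟶ Y), WM f → WM (Q.map f) := by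
    intro X Y f hf
    refine cancelL (Q.map f) (q.app Y) ?_ (hq Y)
    rw [q.naturality f]
    exact compM _ _ (hq X) (by simpa using hf)
  have Diso : ∀ {X Y : M} (f : X ⟶ Y), P X → P Y → WM f → IsIso (δ.map (F.map f)) := by
    intro X Y f hX hY hf
    exact Localization.inverts WN.Q WN _ (hF f hX hY hf)
  have hκ : ∀ X : M, κ.app X = δ.map (F.map (q.app X)) := by
    intro X; simp [κ, δ]
  constructor
  · intro X Y f hf
    exact Diso _ (hQ X) (hQ Y) (hQmap f hf)
  · intro G hG α
    haveI hGq : ∀ X : M, IsIso (G.map (q.app X)) := fun X => hG _ (hq X)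
    -- the key identity: δF(Q q_X) = δF(q_{QX})
    have key : ∀ X : M,
        δ.map (F.map (Q.map (q.app X))) = δ.map (F.map (q.app (Q.obj X)))  := by
      intro X
      haveI i1 : IsIso (δ.map (F.map (Q.map (q.app X)))) :=
        Diso _ (hQ _) (hQ _) (hQmap _ (hq X))
      haveI i2 : IsIso (δ.map (F.map (q.app (Q.obj X)))) := Diso _ (hQ _) (hQ _) (hq _)
      haveI i3 : IsIso (δ.map (F.map (q.app (Q.obj (Q.obj X))))) :=
        Diso _ (hQ _) (hQ _) (hq _)
      -- (A) naturality of q at q.app X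
      have hA : Q.map (q.app X) ≫ q.app X = q.app (Q.obj X) ≫ q.app X := by
        simpa using q.naturality (q.app X)
      -- (B) naturality of q at q.app (Q.obj X)
      have hB : Q.map (q.app (Q.obj X)) ≫ q.app (Q.obj X)
          = q.app (Q.obj (Q.obj X)) ≫ q.app (Q.obj X) := by
        simpa using q.naturality (q.app (Q.obj X))
      -- (C) naturality of q at Q.map (q.app X)
      have hC : Q.map (Q.map (q.app X)) ≫ q.app (Q.obj X)
          = q.app (Q.obj (Q.obj X)) ≫ Q.map (q.app X) := by
        simpa using q.naturality (Q.map (q.app X))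
      -- apply Q to (A)
      have hA' : Q.map (Q.map (q.app X)) ≫ Q.map (q.app X)
          = Q.map (q.app (Q.obj X)) ≫ Q.map (q.app X) := by
        rw [← Q.map_comp, ← Q.map_comp, hA]
      -- push everything through δ ∘ F
      have e3 : δ.map (F.map (Q.map (Q.map (q.app X))))
          = δ.map (F.map (Q.map (q.app (Q.obj X)))) := by
        have := congrArg (fun f => δ.map (F.map f)) hA'
        simp only [F.map_comp, δ.map_comp] at this
        exact (cancel_mono (δ.map (F.map (Q.map (q.app X))))).1 this
      have e2 : δ.map (F.map (Q.map (q.app (Q.obj X))))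
          = δ.map (F.map (q.app (Q.obj (Q.obj X)))) := by
        have := congrArg (fun f => δ.map (F.map f)) hB
        simp only [F.map_comp, δ.map_comp] at this
        exact (cancel_mono (δ.map (F.map (q.app (Q.obj X))))).1 this
      have eC : δ.map (F.map (Q.map (Q.map (q.app X)))) ≫ δ.map (F.map (q.app (Q.obj X)))
          = δ.map (F.map (q.app (Q.obj (Q.obj X)))) ≫ δ.map (F.map (Q.map (q.app X))) := by
        have := congrArg (fun f => δ.map (F.map f)) hC
        simpa only [F.map_comp, δ.map_comp] using this
      rw [e3, e2] at eC
      exact ((cancel_epi (δ.map (F.map (q.app (Q.obj (Q.obj X)))))).1 eC).symm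
    -- construct β
    refine ⟨{ app := fun X => inv (G.map (q.app X)) ≫ α.app (Q.obj X)
              naturality := ?_ }, ?_, ?_⟩
    · intro X Y f
      rw [← cancel_epi (G.map (q.app X))]
      have hnat : q.app X ≫ f = Q.map f ≫ q.app Y := by
        simpa using (q.naturality f).symm
      calc G.map (q.app X) ≫ G.map f ≫ inv (G.map (q.app Y)) ≫ α.app (Q.obj Y)
          = G.map (q.app X ≫ f) ≫ inv (G.map (q.app Y)) ≫ α.app (Q.obj Y) := by
            rw [G.map_comp, Category.assoc]
        _ = G.map (Q.map f) ≫ G.map (q.app Y) ≫ inv (G.map (q.app Y)) ≫ α.app (Q.obj Y) := by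
            rw [hnat, G.map_comp, Category.assoc]
        _ = G.map (Q.map f) ≫ α.app (Q.obj Y) := by
            rw [IsIso.hom_inv_id_assoc]
        _ = α.app (Q.obj X) ≫ (F ⋙ δ).map (Q.map f) := α.naturality (Q.map f)
        _ = G.map (q.app X) ≫ (inv (G.map (q.app X)) ≫ α.app (Q.obj X)) ≫ (Q ⋙ F ⋙ δ).map f := by
            simp only [Category.assoc, IsIso.hom_inv_id_assoc]
            rfl
    · ext X
      have hn := α.naturality (q.app X)
      simp only [NatTrans.comp_app, hκ X]
      rw [Category.assoc]
      simp only [Functor.comp_map] at hn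
      rw [← hn, IsIso.inv_hom_id_assoc]
      rfl
    · intro β' hβ'
      ext X
      have h1 := NatTrans.congr_app hβ' X
      have h2 := NatTrans.congr_app hβ' (Q.obj X)
      simp only [NatTrans.comp_app, hκ _] at h1 h2
      show β'.app X = inv (G.map (q.app X)) ≫ α.app (Q.obj X)
      rw [IsIso.eq_inv_comp]
      calc G.map (q.app X) ≫ β'.app X
          = β'.app (Q.obj X) ≫ (Q ⋙ F ⋙ δ).map (q.app X) := β'.naturality (q.app X)
        _ = β'.app (Q.obj X) ≫ δ.map (F.map (q.app (Q.obj X))) := by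
            rw [show (Q ⋙ F ⋙ δ).map (q.app X) = δ.map (F.map (Q.map (q.app X))) from rfl,
              key X]
        _ = α.app (Q.obj X) := h2
end

section
/- Let F : M → N be a functor between homotopical categories, (Q, q : Q ⟶ 𝟭_M) a left deformation into a full subcategory M_Q on which F preserves weak equivalences, and (R, r : 𝟭_M ⟶ R) a right deformation into a full subcategory M_R on which F preserves weak equivalences. If Q maps M_R into itself, then the two induced functors Ho(M) → Ho(N) determined by δ∘F∘Q and δ∘F∘R are naturally isomorphic (i.e. the left and right derived functors of F agree). -/
open CategoryTheory

/-- If `(Q, q)` is a left `F`-deformation into `M_Q`, `(R, r)` a right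
`F`-deformation into `M_R`, and `Q` maps `M_R` into itself, then the induced functors
`Ho(M) ⥤ Ho(N)` determined by `δ∘F∘Q` and `δ∘F∘R` (the left and right derived functors
of `F`) are naturally isomorphic. -/
theorem statement5 {M : Type u₁} [Category.{v₁} M] {N : Type u₂} [Category.{v₂} N]
    (WM : MorphismProperty M) (WN : MorphismProperty N)
    (hidM : ∀ X : M, WM (𝟙 X))
    (h26M : ∀ {X Y Z T : M} (f : X ⟶ Y) (g : Y ⟶ Z) (h : Z ⟶ T),
      WM (f ≫ g) → WM (g ≫ h) → WM f ∧ WM g ∧ WM h ∧ WM (f ≫ g ≫ h))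
    (hidN : ∀ X : N, WN (𝟙 X))
    (h26N : ∀ {X Y Z T : N} (f : X ⟶ Y) (g : Y ⟶ Z) (h : Z ⟶ T),
      WN (f ≫ g) → WN (g ≫ h) → WN f ∧ WN g ∧ WN h ∧ WN (f ≫ g ≫ h))
    (F : M ⥤ N)
    (PQ PR : M → Prop)
    (Q : M ⥤ M) (hQ : ∀ X : M, PQ (Q.obj X))
    (q : Q ⟶ 𝟭 M) (hq : ∀ X : M, WM (q.app X))
    (R : M ⥤ M) (hR : ∀ X : M, PR (R.obj X))
    (r : 𝟭 M ⟶ R) (hr : ∀ X : M, WM (r.app X))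
    -- `F` preserves weak equivalences on `M_Q` and on `M_R`:
    (hFQ : ∀ {X Y : M} (f : X ⟶ Y), PQ X → PQ Y → WM f → WN (F.map f))
    (hFR : ∀ {X Y : M} (f : X ⟶ Y), PR X → PR Y → WM f → WN (F.map f))
    -- `Q` maps `M_R` into itself:
    (hQR : ∀ X : M, PR X → PR (Q.obj X))
    -- `LF` and `RF` are the functors on homotopy categories induced by `δ∘F∘Q`, `δ∘F∘R`:
    (LF RF : WM.Localization ⥤ WN.Localization)
    (eL : WM.Q ⋙ LF ≅ Q ⋙ F ⋙ WN.Q)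
    (eR : WM.Q ⋙ RF ≅ R ⋙ F ⋙ WN.Q) :
    Nonempty (LF ≅ RF) := by
  -- composition closure in M, derived from 2-of-6
  have hcompM : ∀ {X Y Z : M} (f : X ⟶ Y) (g : Y ⟶ Z), WM f → WM g → WM (f ≫ g) := by
    intro X Y Z f g hf hg
    have h1 : WM (f ≫ 𝟙 Y) := by simpa using hf
    have h2 : WM (𝟙 Y ≫ g) := by simpa using hg
    have := (h26M f (𝟙 Y) g h1 h2).2.2.2
    simpa using this
  have hcompN : ∀ {X Y Z : N} (f : X ⟶ Y) (g : Y ⟶ Z), WN f → WN g → WN (f ≫ g) := by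
    intro X Y Z f g hf hg
    have h1 : WN (f ≫ 𝟙 Y) := by simpa using hf
    have h2 : WN (𝟙 Y ≫ g) := by simpa using hg
    have := (h26N f (𝟙 Y) g h1 h2).2.2.2
    simpa using this
  -- Q.map (r.app X) is a weak equivalence, by 2-of-6
  have hQr : ∀ X : M, WM (Q.map (r.app X)) := by
    intro X
    have hnat : Q.map (r.app X) ≫ q.app (R.obj X) = q.app X ≫ r.app X := by
      simpa using (q.naturality (r.app X))
    have h1 : WM (Q.map (r.app X) ≫ q.app (R.obj X)) := by
      rw [hnat]; exact hcompM _ _ (hq X) (hr X)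
    have h2 : WM (q.app (R.obj X) ≫ r.app (R.obj X)) :=
      hcompM _ _ (hq (R.obj X)) (hr (R.obj X))
    exact (h26M (Q.map (r.app X)) (q.app (R.obj X)) (r.app (R.obj X)) h1 h2).1
  -- the natural transformation τ : Q⋙F ⟶ R⋙F
  let τ : Q ⋙ F ⟶ R ⋙ F :=
    { app := fun X => F.map (Q.map (r.app X)) ≫ F.map (q.app (R.obj X))
      naturality := by
        intro X Y f
        dsimp
        have h1 := r.naturality f
        have h2 := q.naturality (R.map f)
        simp only [Functor.id_map] at h1 h2
        have key : Q.map f ≫ Q.map (r.app Y) ≫ q.app (R.obj Y)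
            = (Q.map (r.app X) ≫ q.app (R.obj X)) ≫ R.map f := by
          rw [← Category.assoc, ← Q.map_comp, h1, Q.map_comp, Category.assoc, h2,
            ← Category.assoc]
        have key2 := congrArg F.map key
        simp only [Functor.map_comp, Category.assoc] at key2 ⊢
        exact key2 }
  -- each component of τ is a weak equivalence of N
  have hτ : ∀ X : M, WN (τ.app X) := by
    intro X
    refine hcompN _ _ ?_ ?_
    · exact hFQ _ (hQ X) (hQ (R.obj X)) (hQr X)
    · exact hFR _ (hQR _ (hR X)) (hR X) (hq (R.obj X))
  -- hence whiskering with WN.Q gives a natural isomorphism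
  have inv := Localization.inverts WN.Q WN
  let α : Q ⋙ F ⋙ WN.Q ≅ R ⋙ F ⋙ WN.Q :=
    NatIso.ofComponents
      (fun X => @asIso _ _ _ _ (WN.Q.map (τ.app X)) (inv _ (hτ X)))
      (by
        intro X Y f
        dsimp
        rw [← WN.Q.map_comp, ← WN.Q.map_comp]
        congr 1
        exact τ.naturality f)
  letI : Localization.Lifting WM.Q WM (Q ⋙ F ⋙ WN.Q) LF := ⟨eL⟩
  letI : Localization.Lifting WM.Q WM (R ⋙ F ⋙ WN.Q) RF := ⟨eR⟩
  exact ⟨Localization.liftNatIso WM.Q WM _ _ LF RF α⟩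
end

section
/- Let F₁ : M → N and F₂ : N → P be functors between homotopical categories. Suppose there are left deformations (Q_M, q_M) of M into M_Q and (Q_N, q_N) of N into N_Q such that: F₁ preserves weak equivalences on M_Q, F₂ preserves weak equivalences on N_Q, F₂∘F₁ preserves weak equivalences on M_Q, and F₁ maps M_Q into N_Q. Then the composite of the induced functors on homotopy categories, Ho(F₂ ∘ Q_N) ∘ Ho(F₁ ∘ Q_M), is naturally isomorphic to Ho((F₂ ∘ F₁) ∘ Q_M); i.e. LF₂ ∘ LF₁ ≅ L(F₂ ∘ F₁). -/
open CategoryTheory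

/-- For a left deformable pair `(F₁, F₂)`, the composite of the left derived
functors is a left derived functor of the composite: `LF₂ ∘ LF₁ ≅ L(F₂ ∘ F₁)`. -/
theorem statement8 {M : Type u₁} [Category.{v₁} M] {N : Type u₂} [Category.{v₂} N]
    {P : Type u₃} [Category.{v₃} P]
    (WM : MorphismProperty M) (WN : MorphismProperty N) (WP : MorphismProperty P)
    (hidM : ∀ X : M, WM (𝟙 X))
    (h26M : ∀ {X Y Z T : M} (f : X ⟶ Y) (g : Y ⟶ Z) (h : Z ⟶ T),
      WM (f ≫ g) → WM (g ≫ h) → WM f ∧ WM g ∧ WM h ∧ WM (f ≫ g ≫ h))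
    (hidN : ∀ X : N, WN (𝟙 X))
    (h26N : ∀ {X Y Z T : N} (f : X ⟶ Y) (g : Y ⟶ Z) (h : Z ⟶ T),
      WN (f ≫ g) → WN (g ≫ h) → WN f ∧ WN g ∧ WN h ∧ WN (f ≫ g ≫ h))
    (hidP : ∀ X : P, WP (𝟙 X))
    (h26P : ∀ {X Y Z T : P} (f : X ⟶ Y) (g : Y ⟶ Z) (h : Z ⟶ T),
      WP (f ≫ g) → WP (g ≫ h) → WP f ∧ WP g ∧ WP h ∧ WP (f ≫ g ≫ h))
    (F₁ : M ⥤ N) (F₂ : N ⥤ P)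
    (PM : M → Prop) (QM : M ⥤ M) (hQM : ∀ X : M, PM (QM.obj X))
    (qM : QM ⟶ 𝟭 M) (hqM : ∀ X : M, WM (qM.app X))
    (PN : N → Prop) (QN : N ⥤ N) (hQN : ∀ X : N, PN (QN.obj X))
    (qN : QN ⟶ 𝟭 N) (hqN : ∀ X : N, WN (qN.app X))
    -- `F₁` is homotopical on `M_Q`, `F₂` on `N_Q`, `F₂∘F₁` on `M_Q`:
    (hF₁ : ∀ {X Y : M} (f : X ⟶ Y), PM X → PM Y → WM f → WN (F₁.map f))
    (hF₂ : ∀ {X Y : N} (f : X ⟶ Y), PN X → PN Y → WN f → WP (F₂.map f))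
    (hF₂F₁ : ∀ {X Y : M} (f : X ⟶ Y), PM X → PM Y → WM f → WP (F₂.map (F₁.map f)))
    -- `F₁` maps `M_Q` into `N_Q`:
    (hF₁Q : ∀ X : M, PM X → PN (F₁.obj X))
    -- the induced (derived) functors on homotopy categories:
    (LF₁ : WM.Localization ⥤ WN.Localization)
    (e₁ : WM.Q ⋙ LF₁ ≅ QM ⋙ F₁ ⋙ WN.Q)
    (LF₂ : WN.Localization ⥤ WP.Localization)
    (e₂ : WN.Q ⋙ LF₂ ≅ QN ⋙ F₂ ⋙ WP.Q)
    (LF₁₂ : WM.Localization ⥤ WP.Localization)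
    (e₁₂ : WM.Q ⋙ LF₁₂ ≅ QM ⋙ (F₁ ⋙ F₂) ⋙ WP.Q) :
    Nonempty (LF₁ ⋙ LF₂ ≅ LF₁₂) := by

  -- the middle comparison: `Q_N` can be dropped after applying `F₂ ⋙ WP.Q`
  haveI : ∀ X : M, IsIso (WP.Q.map (F₂.map (qN.app (F₁.obj (QM.obj X))))) := fun X =>
    Localization.inverts WP.Q WP _
      (hF₂ _ (hQN _) (hF₁Q _ (hQM X)) (hqN (F₁.obj (QM.obj X))))
  let θ : (QM ⋙ F₁) ⋙ QN ⋙ F₂ ⋙ WP.Q ≅ QM ⋙ (F₁ ⋙ F₂) ⋙ WP.Q :=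
    NatIso.ofComponents
      (fun X => asIso (WP.Q.map (F₂.map (qN.app (F₁.obj (QM.obj X))))))
      (fun f => by
        dsimp
        rw [← WP.Q.map_comp, ← WP.Q.map_comp, ← F₂.map_comp, ← F₂.map_comp,
          qN.naturality, Functor.id_map])
  let α : WM.Q ⋙ LF₁ ⋙ LF₂ ≅ QM ⋙ (F₁ ⋙ F₂) ⋙ WP.Q :=
    (Functor.associator _ _ _).symm ≪≫ Functor.isoWhiskerRight e₁ LF₂ ≪≫
      Functor.associator _ _ _ ≪≫ Functor.isoWhiskerLeft QM (Functor.associator _ _ _) ≪≫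
      (Functor.associator _ _ _).symm ≪≫ Functor.isoWhiskerLeft (QM ⋙ F₁) e₂ ≪≫ θ
  letI : Localization.Lifting WM.Q WM (QM ⋙ (F₁ ⋙ F₂) ⋙ WP.Q) (LF₁ ⋙ LF₂) := ⟨α⟩
  letI : Localization.Lifting WM.Q WM (QM ⋙ (F₁ ⋙ F₂) ⋙ WP.Q) LF₁₂ := ⟨e₁₂⟩
  exact ⟨Localization.liftNatIso WM.Q WM _ _ (LF₁ ⋙ LF₂) LF₁₂ (Iso.refl (QM ⋙ (F₁ ⋙ F₂) ⋙ WP.Q))⟩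
end

section
/- Let D be a small category, let Δᵒᵖ D denote the opposite of its category of simplices (objects are functors α : [n] → D for n ≥ 0, i.e. strings of composable arrows in D), and let S : Δᵒᵖ D → D be the functor sending a simplex α : [n] → D to its source object α(0). Then S is a final (cofinal) functor; consequently, for every functor F : D → M into a cocomplete category M, the canonical map colim_{Δᵒᵖ D} (F ∘ S) → colim_D F is an isomorphism. -/
open CategoryTheory CategoryTheory.Limits

namespace Statement10

universe v u u₂ v₂

variable {D : Type u} [Category.{v} D]

private lemma key1 {P : Type*} [Preorder P] (F : P ⥤ D) {i j : P} (hij : j = i)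
    (a : i ≤ j) (E : F.obj j = F.obj i) :
    F.map (homOfLE a) ≫ eqToHom E = 𝟙 (F.obj i) := by
  subst hij
  rw [Subsingleton.elim E rfl, eqToHom_refl, Category.comp_id,
    Subsingleton.elim (homOfLE a) (𝟙 _)]
  exact F.map_id _

private lemma key3 {P : Type*} [Preorder P] (F : P ⥤ D) {Z : D} {i j k l l' : P}
    (hjk : j = k) (hll' : l = l')
    (a : i ≤ l) (b : i ≤ j) (c : k ≤ l')
    (E1 : F.obj l = Z) (E2 : F.obj j = F.obj k) (E3 : F.obj l' = Z) :
    F.map (homOfLE a) ≫ eqToHom E1 =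
      F.map (homOfLE b) ≫ eqToHom E2 ≫ F.map (homOfLE c) ≫ eqToHom E3 := by
  subst hjk; subst hll'
  rw [Subsingleton.elim E2 rfl, eqToHom_refl, Category.id_comp,
    Subsingleton.elim E1 E3, ← Category.assoc, ← F.map_comp]
  congr 1

variable (D)

/-- The opposite category of simplices `Δᵒᵖ D` of a small category `D`, realized as the
category of elements of the nerve of `D`: its objects are the simplices `α : [n] → D`
of the nerve, of all dimensions. -/
abbrev OpSimplices := (nerve D).Elements

/-- The "source" functor `S : Δᵒᵖ D ⥤ D`, sending a simplex `α : [n] → D` to its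
initial vertex `α(0)`. -/
def Sfunc : OpSimplices D ⥤ D where
  obj p := p.2.obj (0 : Fin (p.1.unop.len + 1))
  map {p q} f :=
    p.2.map (homOfLE (Fin.zero_le
        ((SimplexCategory.toCat.map f.1.unop).toFunctor.obj (0 : Fin (q.1.unop.len + 1))))) ≫
      eqToHom (Functor.congr_obj f.2 (0 : Fin (q.1.unop.len + 1)))
  map_id p := key1 p.2 rfl _ _
  map_comp {p q r} f g := by
    dsimp only
    rw [Functor.congr_hom f.2.symm
      (homOfLE (Fin.zero_le ((SimplexCategory.toCat.map g.1.unop).toFunctor.obj (0 : Fin (r.1.unop.len + 1)))))]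
    simp only [Category.assoc, eqToHom_trans, eqToHom_trans_assoc]
    erw [eqToHom_trans_assoc, eqToHom_trans]
    exact key3 p.2 rfl rfl _ _ _ _ _ _

open SimplexCategory in
lemma toCat_map_δ₀ (n : ℕ) :
    (toCat.map (SimplexCategory.δ (0 : Fin (n+2)))).toFunctor = Fin.succFunctor (n+1) := by
  refine CategoryTheory.Functor.ext ?_ ?_
  · intro j; exact Fin.zero_succAbove j
  · intros; exact Subsingleton.elim (α := ((_ : Fin (n+2)) ⟶ _)) _ _

variable {D}

private lemma precomp_map_to_one {n : ℕ} (F : ComposableArrows D n) {X : D} (f : X ⟶ F.left)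
    {t : Fin (n+2)} (ht : t = 1) (a : (0 : Fin (n+2)) ≤ t) :
    HEq ((F.precomp f).map (homOfLE a)) f := by
  subst ht
  exact heq_of_eq (ComposableArrows.Precomp.map_zero_one F f)

private lemma precomp_map_to_zero {n : ℕ} (F : ComposableArrows D n) {X : D} (f : X ⟶ F.left)
    {t : Fin (n+2)} (ht : t = 0) (a : (0 : Fin (n+2)) ≤ t) :
    HEq ((F.precomp f).map (homOfLE a)) (𝟙 X) := by
  subst ht
  exact heq_of_eq (ComposableArrows.Precomp.map_zero_zero F f)

open SimplexCategory in
lemma nerve_map_δ₀ {n : ℕ} (F : ComposableArrows D n) {X : D} (f : X ⟶ F.left) :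
    (nerve D).map (SimplexCategory.δ (0 : Fin (n+2))).op (F.precomp f) = F := by
  show (F.precomp f).whiskerLeft (toCat.map (SimplexCategory.δ (0 : Fin (n+2)))).toFunctor = F
  rw [toCat_map_δ₀]
  exact F.precomp_δ₀ f

open SimplexCategory in
lemma nerve_map_vertex {n : ℕ} (F : ComposableArrows D (n+1)) :
    (nerve D).map (SimplexCategory.const (SimplexCategory.mk 0) (SimplexCategory.mk (n+1)) 0).op F = ComposableArrows.mk₀ (F.obj 0) := by
  refine ComposableArrows.ext₀ ?_
  rfl

lemma final_Sfunc : (Sfunc D).Final := by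
  constructor
  intro d
  apply IsConnected.of_induct
    (j₀ := StructuredArrow.mk (Y := (nerve D).elementsMk (Opposite.op (SimplexCategory.mk 0))
      (ComposableArrows.mk₀ d)) (𝟙 d))
  intro p hp hcl X
  set n := X.right.1.unop.len with hn
  set α : ComposableArrows D n := X.right.2 with hα
  set f : d ⟶ α.obj 0 := X.hom with hf
  let α' : ComposableArrows D (n+1) := ComposableArrows.precomp α f
  let A : StructuredArrow d (Sfunc D) :=
    StructuredArrow.mk (Y := (nerve D).elementsMk (Opposite.op (SimplexCategory.mk (n+1))) α') (𝟙 d)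
  have g1 : A ⟶ X := by
    refine StructuredArrow.homMk
      (CategoryOfElements.homMk _ X.right ((SimplexCategory.δ (0 : Fin (n+2))).op) ?_) ?_
    · exact nerve_map_δ₀ α f
    · dsimp [Sfunc, A]
      erw [Category.id_comp, Category.comp_id]
      refine eq_of_heq (precomp_map_to_one α f ?_ _)
      show (SimplexCategory.δ (0 : Fin (n+2))).toOrderHom 0 = 1
      simp [SimplexCategory.δ, Fin.succAboveOrderEmb]
  have g2 : A ⟶ StructuredArrow.mk (Y := (nerve D).elementsMk (Opposite.op (SimplexCategory.mk 0))
      (ComposableArrows.mk₀ d)) (𝟙 d) := by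
    refine StructuredArrow.homMk
      (CategoryOfElements.homMk _ _ ((SimplexCategory.const (SimplexCategory.mk 0)
        (SimplexCategory.mk (n+1)) 0).op) ?_) ?_
    · exact nerve_map_vertex α'
    · dsimp [Sfunc, A]
      erw [Category.id_comp, Category.comp_id]
      exact eq_of_heq (precomp_map_to_zero α f rfl _)
  exact (hcl g1).mp ((hcl g2).mpr hp)


end Statement10

open Statement10

/-- The source functor `S : Δᵒᵖ D ⥤ D` from the (opposite) category of
simplices of `D` is final; consequently, for every functor `F : D ⥤ M` into a cocomplete
category `M`, the canonical map `colim_{Δᵒᵖ D} (F ∘ S) ⟶ colim_D F` is an isomorphism. -/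
theorem statement10 (D : Type u) [SmallCategory D] :
    (Sfunc D).Final ∧
    ∀ (M : Type u₂) [Category.{v₂} M] [HasColimitsOfSize.{u, u} M] [HasColimitsOfSize.{0, u} M] (F : D ⥤ M),
      IsIso (colimit.pre F (Sfunc D)) := by
  have h : (Sfunc D).Final := final_Sfunc
  refine ⟨h, ?_⟩
  intro M _ _ _ F
  infer_instance
end

section
/- Let D be a small category, Δᵒᵖ D its opposite category of simplices with forgetful functor Σ : Δᵒᵖ D → Δᵒᵖ sending an n-simplex to [n], and S : Δᵒᵖ D → D the source functor. Let M be cocomplete and F : D → M a functor. Then the left Kan extension of F ∘ S along Σ is computed objectwise by (Lan_Σ (F∘S))([n]) ≅ ∐_{α : [n] → D} F(α(0)), the coproduct over all functors α : [n] → D (i.e. all n-simplices of the nerve of D) of the value of F at the initial vertex of α. In particular, the comma category (Σ ↓ [n]) is a disjoint union, indexed by the n-simplices α of N D, of categories each having a terminal object given by α itself. -/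
open CategoryTheory CategoryTheory.Limits

namespace Statement11

universe v u u₂ v₂

variable {D : Type u} [Category.{v} D]

private lemma key1 {P : Type*} [Preorder P] (F : P ⥤ D) {i j : P} (hij : j = i)
    (a : i ≤ j) (E : F.obj j = F.obj i) :
    F.map (homOfLE a) ≫ eqToHom E = 𝟙 (F.obj i) := by
  subst hij
  rw [Subsingleton.elim E rfl, eqToHom_refl, Category.comp_id,
    Subsingleton.elim (homOfLE a) (𝟙 _)]
  exact F.map_id _

private lemma key3 {P : Type*} [Preorder P] (F : P ⥤ D) {Z : D} {i j k l l' : P}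
    (hjk : j = k) (hll' : l = l')
    (a : i ≤ l) (b : i ≤ j) (c : k ≤ l')
    (E1 : F.obj l = Z) (E2 : F.obj j = F.obj k) (E3 : F.obj l' = Z) :
    F.map (homOfLE a) ≫ eqToHom E1 =
      F.map (homOfLE b) ≫ eqToHom E2 ≫ F.map (homOfLE c) ≫ eqToHom E3 := by
  subst hjk; subst hll'
  rw [Subsingleton.elim E2 rfl, eqToHom_refl, Category.id_comp,
    Subsingleton.elim E1 E3, ← Category.assoc, ← F.map_comp]
  congr 1

variable (D)

/-- The opposite category of simplices `Δᵒᵖ D` of a small category `D`, realized as the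
category of elements of the nerve of `D`: its objects are the simplices `α : [n] → D`
of the nerve, of all dimensions. -/
abbrev OpSimplices := (nerve D).Elements

/-- The "source" functor `S : Δᵒᵖ D ⥤ D`, sending a simplex `α : [n] → D` to its
initial vertex `α(0)`. -/
def Sfunc : OpSimplices D ⥤ D where
  obj p := p.2.obj (0 : Fin (p.1.unop.len + 1))
  map {p q} f :=
    p.2.map (homOfLE (Fin.zero_le
        ((SimplexCategory.toCat.map f.1.unop).toFunctor.obj (0 : Fin (q.1.unop.len + 1))))) ≫
      eqToHom (Functor.congr_obj f.2 (0 : Fin (q.1.unop.len + 1)))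
  map_id p := key1 p.2 rfl _ _
  map_comp {p q r} f g := by
    dsimp only
    rw [Functor.congr_hom f.2.symm
      (homOfLE (Fin.zero_le ((SimplexCategory.toCat.map g.1.unop).toFunctor.obj (0 : Fin (r.1.unop.len + 1)))))]
    simp only [Category.assoc, eqToHom_trans, eqToHom_trans_assoc]
    erw [eqToHom_trans_assoc, eqToHom_trans]
    exact key3 p.2 rfl rfl _ _ _ _ _ _

end Statement11

open Statement11


namespace Statement11Aux

open Statement11

universe u u₂ v₂

variable {D : Type u} [SmallCategory D]

/-- The terminal object of the component of the comma category `(Σ ↓ Y)` indexed by the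
simplex `α`. -/
abbrev tgt {Y : SimplexCategoryᵒᵖ} (α : (nerve D).obj Y) :
    CostructuredArrow (CategoryOfElements.π (nerve D)) Y :=
  CostructuredArrow.mk (show (CategoryOfElements.π (nerve D)).obj ⟨Y, α⟩ ⟶ Y from 𝟙 _)

/-- The simplex indexing the component of `x`. -/
def αof {Y : SimplexCategoryᵒᵖ} (x : CostructuredArrow (CategoryOfElements.π (nerve D)) Y) :
    (nerve D).obj Y :=
  (nerve D).map x.hom x.left.2

/-- The canonical morphism to the terminal object of the component. -/
def uhom {Y : SimplexCategoryᵒᵖ} (x : CostructuredArrow (CategoryOfElements.π (nerve D)) Y) :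
    x ⟶ tgt (αof x) :=
  CostructuredArrow.homMk ⟨x.hom, rfl⟩ (by exact Category.comp_id x.hom)

lemma alpha_eq {Y : SimplexCategoryᵒᵖ} {x : CostructuredArrow (CategoryOfElements.π (nerve D)) Y}
    {α : (nerve D).obj Y} (f : x ⟶ tgt α) : α = αof x := by
  have h1 : f.left.val = x.hom := by have := CostructuredArrow.w f; exact (Category.comp_id _).symm.trans this
  have h2 := f.left.2
  rw [h1] at h2
  exact h2.symm

lemma hom_eq {Y : SimplexCategoryᵒᵖ} {x : CostructuredArrow (CategoryOfElements.π (nerve D)) Y}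
    {α : (nerve D).obj Y} (f g : x ⟶ tgt α) : f = g := by
  apply CostructuredArrow.hom_ext
  apply CategoryOfElements.ext
  have h1 : f.left.val = x.hom := by have := CostructuredArrow.w f; exact (Category.comp_id _).symm.trans this
  have h2 : g.left.val = x.hom := by have := CostructuredArrow.w g; exact (Category.comp_id _).symm.trans this
  rw [h1, h2]

/-- The morphism space to the terminal object of the component is a singleton. -/
def uniqueHom {Y : SimplexCategoryᵒᵖ} (x : CostructuredArrow (CategoryOfElements.π (nerve D)) Y) :
    Unique (x ⟶ tgt (αof x)) where
  default := uhom x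
  uniq f := hom_eq f _

/-- The inclusion of the discrete category of simplices into the comma category, sending each
simplex to the terminal object of its component. -/
def Kf (Y : SimplexCategoryᵒᵖ) :
    Discrete ((nerve D).obj Y) ⥤ CostructuredArrow (CategoryOfElements.π (nerve D)) Y :=
  Discrete.functor fun α => tgt α

lemma structuredArrow_eq {Y : SimplexCategoryᵒᵖ}
    (x : CostructuredArrow (CategoryOfElements.π (nerve D)) Y)
    (j : StructuredArrow x (Kf Y)) :
    j = StructuredArrow.mk (Y := Discrete.mk (αof x)) (uhom x) := by
  obtain ⟨l, ⟨a⟩, f⟩ := j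
  obtain rfl : a = αof x := alpha_eq (show x ⟶ tgt a from f)
  obtain rfl : f = uhom x := hom_eq _ _
  cases l
  rfl

instance finalKf (Y : SimplexCategoryᵒᵖ) : (Kf (D := D) Y).Final := by
  constructor
  intro x
  apply IsConnected.of_induct (j₀ := StructuredArrow.mk (Y := Discrete.mk (αof x)) (uhom x))
  intro p hp _ j
  rw [structuredArrow_eq x j]
  exact hp

variable {M : Type u₂} [Category.{v₂} M]
  [Limits.HasColimitsOfSize.{u, u} M] (F : D ⥤ M)

instance hasColim (Y : SimplexCategoryᵒᵖ) :
    HasColimit (CostructuredArrow.proj (CategoryOfElements.π (nerve D)) Y ⋙ (Sfunc D ⋙ F)) :=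
  Functor.Final.hasColimit_of_comp (Kf Y)

instance hasPtwise :
    (CategoryOfElements.π (nerve D)).HasPointwiseLeftKanExtension (Sfunc D ⋙ F) :=
  fun Y => hasColim F Y

end Statement11Aux

open Statement11Aux

/-- The left Kan extension of `F ∘ S` along `Σ : Δᵒᵖ D ⥤ Δᵒᵖ` is computed
objectwise by `(Lan_Σ (F∘S))([n]) ≅ ∐_{α : [n] → D} F(α(0))`, the coproduct over all
`n`-simplices `α` of the nerve of `D` of the value of `F` at the initial vertex of `α`;
and the comma category `(Σ ↓ [n])` is a disjoint union, indexed by the `n`-simplices `α`,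
of categories each having a terminal object given by `α` itself. -/


theorem statement11 (D : Type u) [SmallCategory D] (M : Type u₂) [Category.{v₂} M]
    [Limits.HasColimitsOfSize.{u, u} M] [Limits.HasColimitsOfSize.{0, u} M]
    (F : D ⥤ M)
    [(CategoryOfElements.π (nerve D)).HasLeftKanExtension (Sfunc D ⋙ F)] :
    (∀ n : ℕ,
      Nonempty ((((CategoryOfElements.π (nerve D)).leftKanExtension (Sfunc D ⋙ F)).obj
          (Opposite.op (SimplexCategory.mk n))) ≅
        ∐ (fun α : ComposableArrows D n => F.obj (α.obj 0)))) ∧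
    (∀ (n : ℕ)
      (x : CostructuredArrow (CategoryOfElements.π (nerve D))
        (Opposite.op (SimplexCategory.mk n))),
      ∃! α : ComposableArrows D n,
        Nonempty (Unique (x ⟶ CostructuredArrow.mk
          (show (CategoryOfElements.π (nerve D)).obj
              ⟨Opposite.op (SimplexCategory.mk n), α⟩ ⟶ Opposite.op (SimplexCategory.mk n)
            from 𝟙 _))))  := by
  constructor
  · intro n
    have PKE := Functor.isPointwiseLeftKanExtensionOfIsLeftKanExtension
      ((CategoryOfElements.π (nerve D)).leftKanExtension (Sfunc D ⋙ F))
      ((CategoryOfElements.π (nerve D)).leftKanExtensionUnit (Sfunc D ⋙ F))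
    haveI : HasColimitsOfShape (Discrete ((nerve D).obj (Opposite.op (SimplexCategory.mk n)))) M :=
      HasColimitsOfSize.has_colimits_of_shape _
    exact ⟨(PKE (Opposite.op (SimplexCategory.mk n))).isoColimit ≪≫
      (Functor.Final.colimitIso (Kf (Opposite.op (SimplexCategory.mk n)))
        (CostructuredArrow.proj (CategoryOfElements.π (nerve D))
          (Opposite.op (SimplexCategory.mk n)) ⋙ (Sfunc D ⋙ F))).symm ≪≫
      HasColimit.isoOfNatIso (G := Discrete.functor fun α : (nerve D).obj (Opposite.op (SimplexCategory.mk n)) => F.obj (α.obj 0)) (Discrete.natIso fun α => Iso.refl _)⟩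
  · intro n x
    refine ⟨αof x, ⟨uniqueHom x⟩, fun α h => ?_⟩
    obtain ⟨hu⟩ := h
    exact alpha_eq hu.default
end
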